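/- For every positive integer t, the element a = π^{−2t+1} of K = F_{2^τ}((π)) has Artin–Schreier defect D(a) = (π^{−2t+1}); that is, |h² + h + π^{−2t+1}| ≥ |π^{−2t+1}| for all h ∈ K, with equality attained (e.g. at h = 0). -/

import Mathlib

noncomputable section

/-- The finite field with `2 ^ τ` elements. -/
abbrev Fq (τ : ℕ) := GaloisField 2 τ

/-- The field of formal Laurent series `K = F_{2^τ}((π))`. -/
abbrev Kk (τ : ℕ) := LaurentSeries (Fq τ)

/-- The ring of integers `O = F_{2^τ}[[π]]`. -/
abbrev Ok (τ : ℕ) := PowerSeries (Fq τ)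

/-- The Artin–Schreier defect `D(a) = ⋂_{h ∈ K} (h² + h + a)`, an intersection of
principal fractional `O`-ideals (as `O`-submodules of `K`). -/
def ASdefect (τ : ℕ) (a : Kk τ) : Submodule (Ok τ) (Kk τ) :=
  ⨅ h : Kk τ, Submodule.span (Ok τ) {h ^ 2 + h + a}

/-- The uniformizer `π` of `K`, viewed as a Laurent series. -/
def pp (τ : ℕ) : Kk τ := algebraMap (Ok τ) (Kk τ) PowerSeries.X

lemma pp_zpow (τ : ℕ) (z : ℤ) : pp τ ^ z = HahnSeries.single z (1 : Fq τ) := by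
  have h1 : pp τ = HahnSeries.single (1 : ℤ) (1 : Fq τ) := by
    rw [pp, LaurentSeries.coe_algebraMap]
    exact HahnSeries.ofPowerSeries_X
  rw [h1, ← RatFunc.single_zpow]

lemma add_self_Kk (τ : ℕ) (y : Kk τ) : y + y = 0 := by
  ext g
  simp [CharTwo.add_self_eq_zero]

lemma order_sq_add_self (τ : ℕ) (h : Kk τ) (hs : h ^ 2 + h ≠ 0) :
    0 ≤ (h ^ 2 + h).order ∨ (h ^ 2 + h).order = 2 * h.order ∧ h.order < 0 := by
  have hh : h ≠ 0 := by rintro rfl; simp at hs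
  have hh2 : h ^ 2 ≠ 0 := pow_ne_zero _ hh
  have hsq : (h ^ 2).order = 2 * h.order := by
    rw [pow_two, HahnSeries.order_mul hh hh]; ring
  rcases le_or_gt 0 h.order with hm | hm
  · left
    refine le_trans ?_ (HahnSeries.min_order_le_order_add hs)
    rw [hsq]; exact le_min (by linarith) hm
  · right
    refine ⟨?_, hm⟩
    have hlt : (h ^ 2).orderTop < h.orderTop := by
      rw [← HahnSeries.order_eq_orderTop_of_ne_zero hh, ← HahnSeries.order_eq_orderTop_of_ne_zero hh2, hsq]
      exact_mod_cast (by linarith : 2 * h.order < h.order)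
    have := HahnSeries.orderTop_add_eq_left hlt
    rw [← HahnSeries.order_eq_orderTop_of_ne_zero hs, ← HahnSeries.order_eq_orderTop_of_ne_zero hh2, hsq] at this
    exact_mod_cast this

/-- key: `h^2 + h + a` is nonzero with order `≤ z` when `a = single z 1`, `z` negative odd. -/
lemma key (τ : ℕ) (z : ℤ) (hz : z < 0) (hodd : ∀ m : ℤ, z ≠ 2 * m) (h : Kk τ) :
    h ^ 2 + h + HahnSeries.single z (1 : Fq τ) ≠ 0 ∧
      (h ^ 2 + h + HahnSeries.single z (1 : Fq τ)).order ≤ z := by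
  set a : Kk τ := HahnSeries.single z (1 : Fq τ) with ha
  have ha0 : a ≠ 0 := HahnSeries.single_ne_zero one_ne_zero
  have haord : a.order = z := HahnSeries.order_single one_ne_zero
  set s : Kk τ := h ^ 2 + h with hsdef
  have sorder : s ≠ 0 → s.order ≠ z := by
    intro hs hsz
    rcases order_sq_add_self τ h hs with h1 | ⟨h1, _⟩
    · rw [← hsdef] at h1; omega
    · rw [← hsdef] at h1; exact hodd h.order (by omega)
  have hx0 : s + a ≠ 0 := by
    intro h0
    have hs : s = a := by
      have := congrArg (· + a) h0
      simpa [add_assoc, add_self_Kk] using this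
    have hs0 : s ≠ 0 := hs ▸ ha0
    exact sorder hs0 (hs ▸ haord)
  refine ⟨hx0, ?_⟩
  by_contra hgt
  push_neg at hgt
  -- then s = (s + a) + a has order z, contradiction
  have hs0 : s ≠ 0 := by
    intro h0
    rw [hsdef] at h0; rw [hsdef, h0, zero_add] at hgt
    omega
  have hseq : s = (s + a) + a := by rw [add_assoc, add_self_Kk, add_zero]
  have hlt : a.orderTop < (s + a).orderTop := by
    rw [← HahnSeries.order_eq_orderTop_of_ne_zero ha0, ← HahnSeries.order_eq_orderTop_of_ne_zero hx0, haord]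
    exact_mod_cast hgt
  have : (a + (s + a)).orderTop = a.orderTop := HahnSeries.orderTop_add_eq_left hlt
  have hcomm : a + (s + a) = s := by rw [add_comm, ← hseq]
  rw [hcomm, ← HahnSeries.order_eq_orderTop_of_ne_zero hs0, ← HahnSeries.order_eq_orderTop_of_ne_zero ha0, haord] at this
  exact sorder hs0 (by exact_mod_cast this)

/-- membership in principal span via order comparison -/
lemma mem_span_of_order_le (τ : ℕ) (x y : Kk τ) (hx : x ≠ 0) (hy : y ≠ 0)
    (hord : x.order ≤ y.order) : y ∈ Submodule.span (Ok τ) {x} := by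
  set q : Kk τ := y * x⁻¹ with hq
  have hq0 : q ≠ 0 := mul_ne_zero hy (inv_ne_zero hx)
  have hqord : 0 ≤ q.order := by
    have hxinv : (x⁻¹).order = -x.order := by
      have h1 : x * x⁻¹ = 1 := mul_inv_cancel₀ hx
      have := HahnSeries.order_mul hx (inv_ne_zero hx)
      rw [h1, HahnSeries.order_one] at this
      omega
    rw [hq, HahnSeries.order_mul hy (inv_ne_zero hx), hxinv]
    omega
  rw [Submodule.mem_span_singleton]
  refine ⟨PowerSeries.X ^ q.order.toNat * q.powerSeriesPart, ?_⟩
  have hcoe : ((PowerSeries.X ^ q.order.toNat * q.powerSeriesPart : Ok τ) : Kk τ) = q :=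
    LaurentSeries.X_order_mul_powerSeriesPart (by omega)
  have : (PowerSeries.X ^ q.order.toNat * q.powerSeriesPart : Ok τ) • x = q * x := by
    rw [Algebra.smul_def, LaurentSeries.coe_algebraMap]
    exact congrArg (· * x) hcoe
  rw [this, hq, mul_assoc, inv_mul_cancel₀ hx, mul_one]


/-- for every `t > 0`, the element `a = π^{-2t+1}` has Artin–Schreier
defect `D(a) = (π^{-2t+1})`; that is, `|h² + h + a| ≥ |a|` (equivalently
`ν(h² + h + a) ≤ -2t + 1`) for every `h ∈ K`, with equality attained at `h = 0`. -/
theorem ASdefect_pi_odd_neg_pow (τ : ℕ) (hτ : 0 < τ) (t : ℕ) (ht : 0 < t) :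
    ASdefect τ (pp τ ^ (-2 * (t : ℤ) + 1)) =
        Submodule.span (Ok τ) {pp τ ^ (-2 * (t : ℤ) + 1)} ∧
      (∀ h : Kk τ, h ^ 2 + h + pp τ ^ (-2 * (t : ℤ) + 1) ≠ 0 ∧
        HahnSeries.order (h ^ 2 + h + pp τ ^ (-2 * (t : ℤ) + 1)) ≤ -2 * (t : ℤ) + 1) ∧
      HahnSeries.order ((0 : Kk τ) ^ 2 + 0 + pp τ ^ (-2 * (t : ℤ) + 1)) =
        -2 * (t : ℤ) + 1 := by
  set z : ℤ := -2 * (t : ℤ) + 1 with hzdef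
  have hz : z < 0 := by omega
  have hodd : ∀ m : ℤ, z ≠ 2 * m := by intro m; omega
  have hpz : pp τ ^ z = HahnSeries.single z (1 : Fq τ) := pp_zpow τ z
  have ha0 : pp τ ^ z ≠ 0 := by rw [hpz]; exact HahnSeries.single_ne_zero one_ne_zero
  have haord : (pp τ ^ z).order = z := by rw [hpz]; exact HahnSeries.order_single one_ne_zero
  have hkey : ∀ h : Kk τ, h ^ 2 + h + pp τ ^ z ≠ 0 ∧ (h ^ 2 + h + pp τ ^ z).order ≤ z := by
    intro h; rw [hpz]; exact key τ z hz hodd h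
  refine ⟨?_, hkey, by simpa using haord⟩
  apply le_antisymm
  · refine le_trans (iInf_le _ (0 : Kk τ)) ?_
    simp
  · refine le_iInf fun h => ?_
    rw [Submodule.span_le, Set.singleton_subset_iff]
    exact mem_span_of_order_le τ _ _ (hkey h).1 ha0 ((hkey h).2.trans haord.ge)
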